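/- The quotient of the presented group B by the normal closure of the set {R_0} ∪ {R'_i R_i : i = 1,…,n−1} is isomorphic to the alternating subgroup W⁺ of the Coxeter group W of the Coxeter matrix m, via the map induced by R_i ↦ s_0 s_i and R'_i ↦ s_i s_0. -/

import Mathlib

/-- `altProd a b k` is the alternating product `a * b * a * b * ⋯` with `k` factors. -/
def altProd {M : Type*} [Monoid M] (a b : M) : ℕ → M
  | 0 => 1
  | k + 1 => a * altProd b a k

section Defs
variable {n : ℕ}

/-- The defining relations of the presented group `B`, with generators
`R_i = Sum.inl i` and `R'_i = Sum.inr i`:  `R'_0 = 1`;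
`⟨R'_i,R_j⟩_{m_{ij}} = ⟨R'_j,R_i⟩_{m_{ij}}` and `⟨R_i,R'_j⟩_{m_{ij}} = ⟨R_j,R'_i⟩_{m_{ij}}`
for `i < j` with `m_{ij}` finite (entry `0` encodes `∞`, the relation being omitted). -/
def bourbakiRels (M : CoxeterMatrix (Fin n)) (hn : 0 < n) :
    Set (FreeGroup (Fin n ⊕ Fin n)) :=
  { x | x = FreeGroup.of (Sum.inr (⟨0, hn⟩ : Fin n)) ∨
      (∃ i j : Fin n, i < j ∧ M i j ≠ 0 ∧
        x = altProd (FreeGroup.of (Sum.inr i)) (FreeGroup.of (Sum.inl j)) (M i j) *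
          (altProd (FreeGroup.of (Sum.inr j)) (FreeGroup.of (Sum.inl i)) (M i j))⁻¹) ∨
      (∃ i j : Fin n, i < j ∧ M i j ≠ 0 ∧
        x = altProd (FreeGroup.of (Sum.inl i)) (FreeGroup.of (Sum.inr j)) (M i j) *
          (altProd (FreeGroup.of (Sum.inl j)) (FreeGroup.of (Sum.inr i)) (M i j))⁻¹) }

/-- The Coxeter relations `(s_i s_j)^{m_{ij}} = 1` for `i ≤ j` with `m_{ij}` finite
(entry `0` encodes `∞`, the relation being omitted). -/
def coxRels (M : CoxeterMatrix (Fin n)) : Set (FreeGroup (Fin n)) :=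
  { x | ∃ i j : Fin n, i ≤ j ∧ M i j ≠ 0 ∧
      x = (FreeGroup.of i * FreeGroup.of j) ^ (M i j) }

/-- The Coxeter group of the Coxeter matrix `M`. -/
def CoxGroup (M : CoxeterMatrix (Fin n)) : Type _ := PresentedGroup (coxRels M)

instance (M : CoxeterMatrix (Fin n)) : Group (CoxGroup M) :=
  inferInstanceAs (Group (PresentedGroup (coxRels M)))

/-- The generators `s i` of the Coxeter group. -/
def coxGen (M : CoxeterMatrix (Fin n)) (i : Fin n) : CoxGroup M := PresentedGroup.of i

/-- The sign character of the Coxeter group, sending each generator to `-1`. -/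
def coxSign (M : CoxeterMatrix (Fin n)) : CoxGroup M →* ℤˣ :=
  PresentedGroup.toGroup (f := fun _ : Fin n => (-1 : ℤˣ)) (by
    rintro x ⟨i, j, hij, hm, rfl⟩
    simp)

/-- The alternating subgroup `W⁺` of the Coxeter group. -/
def coxAlt (M : CoxeterMatrix (Fin n)) : Subgroup (CoxGroup M) := (coxSign M).ker

end Defs

namespace BourbakiProof

section GroupLemmas
variable {G H : Type*} [Group G] [Group H]

theorem conj_pow (a b : G) (k : ℕ) : a * (b * a) ^ k = (a * b) ^ k * a := by
  induction k with
  | zero => simp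
  | succ k ih =>
    rw [pow_succ', pow_succ', ← mul_assoc a (b * a), ← mul_assoc a b a,
      mul_assoc (a * b) a, ih, ← mul_assoc]

theorem altProd_two_mul (k : ℕ) : ∀ a b : G,
    altProd a b (2 * k) = (a * b) ^ k ∧ altProd a b (2 * k + 1) = (a * b) ^ k * a := by
  induction k with
  | zero => intro a b; constructor <;> simp [altProd]
  | succ k ih =>
    have he : ∀ a b : G, altProd a b (2 * (k + 1)) = (a * b) ^ (k + 1) := by
      intro a b
      rw [show 2 * (k + 1) = (2 * k + 1) + 1 by ring]
      show a * altProd b a (2 * k + 1) = _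
      rw [(ih b a).2, ← mul_assoc, conj_pow, mul_assoc, ← pow_succ]
    intro a b
    refine ⟨he a b, ?_⟩
    show a * altProd b a (2 * (k + 1)) = _
    rw [he b a]
    exact conj_pow a b (k + 1)

theorem altProd_eq_iff (a b : G) (m : ℕ) :
    altProd a b m = altProd b⁻¹ a⁻¹ m ↔ (a * b) ^ m = 1 := by
  have hinv : ∀ k : ℕ, (b⁻¹ * a⁻¹) ^ k = ((a * b) ^ k)⁻¹ := fun k => by
    rw [← mul_inv_rev, inv_pow]
  rcases Nat.even_or_odd m with ⟨k, hk⟩ | ⟨k, hk⟩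
  · rw [show m = 2 * k by omega, (altProd_two_mul k a b).1, (altProd_two_mul k b⁻¹ a⁻¹).1,
      hinv, eq_inv_iff_mul_eq_one, two_mul, pow_add]
  · rw [show m = 2 * k + 1 by omega, (altProd_two_mul k a b).2, (altProd_two_mul k b⁻¹ a⁻¹).2,
      hinv, show ((a * b) ^ k)⁻¹ * b⁻¹ = (b * (a * b) ^ k)⁻¹ from (mul_inv_rev _ _).symm,
      eq_inv_iff_mul_eq_one,
      show (a * b) ^ (2 * k + 1) = (a * b) ^ k * a * (b * (a * b) ^ k) from by
        rw [mul_assoc ((a * b) ^ k) a, ← mul_assoc a b, ← pow_succ', ← pow_add,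
          show k + (k + 1) = 2 * k + 1 by omega]]

theorem map_altProd (f : G →* H) : ∀ (k : ℕ) (a b : G),
    f (altProd a b k) = altProd (f a) (f b) k
  | 0, a, b => by simp [altProd]
  | k + 1, a, b => by
    rw [show altProd a b (k + 1) = a * altProd b a k from rfl, map_mul,
      map_altProd f k b a]
    rfl

end GroupLemmas


section Main
variable {n : ℕ} (M : CoxeterMatrix (Fin n)) (hn : 0 < n)

/-- The extra relators. -/
abbrev extraSet : Set (PresentedGroup (bourbakiRels M hn)) :=
  { x | x = PresentedGroup.of (Sum.inl (⟨0, hn⟩ : Fin n)) ∨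
      ∃ i : Fin n, i ≠ ⟨0, hn⟩ ∧
        x = PresentedGroup.of (Sum.inr i) * PresentedGroup.of (Sum.inl i) }

abbrev Q := PresentedGroup (bourbakiRels M hn) ⧸ Subgroup.normalClosure (extraSet M hn)

def qmk : PresentedGroup (bourbakiRels M hn) →* Q M hn := QuotientGroup.mk' _

def x (i : Fin n) : Q M hn := qmk M hn (PresentedGroup.of (Sum.inl i))

def x' (i : Fin n) : Q M hn := qmk M hn (PresentedGroup.of (Sum.inr i))

theorem x'_zero : x' M hn ⟨0, hn⟩ = 1 := by
  have h : (PresentedGroup.of (Sum.inr (⟨0, hn⟩ : Fin n)) :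
      PresentedGroup (bourbakiRels M hn)) = 1 :=
    (QuotientGroup.eq_one_iff _).2 (Subgroup.subset_normalClosure (Or.inl rfl))
  unfold x'
  rw [h, map_one]

theorem x_zero : x M hn ⟨0, hn⟩ = 1 := by
  show ((PresentedGroup.of (Sum.inl (⟨0, hn⟩ : Fin n)) :
      PresentedGroup (bourbakiRels M hn)) : Q M hn) = 1
  exact (QuotientGroup.eq_one_iff _).2 (Subgroup.subset_normalClosure (Or.inl rfl))

theorem x'_mul_x (i : Fin n) : x' M hn i * x M hn i = 1 := by
  by_cases hi : i = ⟨0, hn⟩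
  · subst hi; rw [x'_zero, x_zero, one_mul]
  · show ((PresentedGroup.of (Sum.inr i) * PresentedGroup.of (Sum.inl i) :
        PresentedGroup (bourbakiRels M hn)) : Q M hn) = 1
    exact (QuotientGroup.eq_one_iff _).2
      (Subgroup.subset_normalClosure (Or.inr ⟨i, hi, rfl⟩))

theorem x'_eq_inv (i : Fin n) : x' M hn i = (x M hn i)⁻¹ :=
  eq_inv_of_mul_eq_one_left (x'_mul_x M hn i)

theorem x_mul_x' (i : Fin n) : x M hn i * x' M hn i = 1 := by
  rw [x'_eq_inv, mul_inv_cancel]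

theorem brel {r : FreeGroup (Fin n ⊕ Fin n)} (hr : r ∈ bourbakiRels M hn) :
    (qmk M hn).comp (PresentedGroup.mk _) r = 1 := by
  have h : (PresentedGroup.mk (bourbakiRels M hn) r) = 1 :=
    (QuotientGroup.eq_one_iff _).2 (Subgroup.subset_normalClosure hr)
  rw [MonoidHom.comp_apply, h, map_one]

theorem rel2 (i j : Fin n) (hij : i < j) (hm : M i j ≠ 0) :
    altProd (x' M hn i) (x M hn j) (M i j) = altProd (x' M hn j) (x M hn i) (M i j) := by
  have h := brel M hn (Or.inr (Or.inl ⟨i, j, hij, hm, rfl⟩))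
  rw [map_mul, map_inv, map_altProd, map_altProd, mul_inv_eq_one] at h
  exact h

theorem rel3 (i j : Fin n) (hij : i < j) (hm : M i j ≠ 0) :
    altProd (x M hn i) (x' M hn j) (M i j) = altProd (x M hn j) (x' M hn i) (M i j) := by
  have h := brel M hn (Or.inr (Or.inr ⟨i, j, hij, hm, rfl⟩))
  rw [map_mul, map_inv, map_altProd, map_altProd, mul_inv_eq_one] at h
  exact h

theorem key (i j : Fin n) (hij : i ≤ j) (hm : M i j ≠ 0) :
    ((x M hn i)⁻¹ * x M hn j) ^ (M i j) = 1 := by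
  rcases eq_or_lt_of_le hij with rfl | h
  · rw [M.diagonal, pow_one, inv_mul_cancel]
  · have h2 := rel2 M hn i j h hm
    rw [x'_eq_inv, x'_eq_inv] at h2
    apply (altProd_eq_iff ((x M hn i)⁻¹) (x M hn j) (M i j)).1
    rw [h2, inv_inv]

theorem q_hom_ext {H : Type*} [Group H] {f g : Q M hn →* H}
    (h1 : ∀ i, f (x M hn i) = g (x M hn i))
    (h2 : ∀ i, f (x' M hn i) = g (x' M hn i)) : f = g := by
  apply QuotientGroup.monoidHom_ext
  apply PresentedGroup.ext
  rintro (i | i)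
  exacts [h1 i, h2 i]

/-! Coxeter group side -/

theorem cox_rel (i j : Fin n) (hij : i ≤ j) (hm : M i j ≠ 0) :
    (coxGen M i * coxGen M j) ^ (M i j) = 1 := by
  have h : (PresentedGroup.mk (coxRels M) ((FreeGroup.of i * FreeGroup.of j) ^ (M i j))) = 1 :=
    (QuotientGroup.eq_one_iff _).2 (Subgroup.subset_normalClosure ⟨i, j, hij, hm, rfl⟩)
  rw [map_pow, map_mul] at h
  exact h

theorem s_sq (i : Fin n) : coxGen M i * coxGen M i = 1 := by
  have h := cox_rel M i i le_rfl (by rw [M.diagonal]; exact one_ne_zero)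
  rwa [M.diagonal, pow_one] at h

theorem s_inv (i : Fin n) : (coxGen M i)⁻¹ = coxGen M i :=
  inv_eq_of_mul_eq_one_left (s_sq M i)

theorem cox_rel' (i j : Fin n) (hm : M i j ≠ 0) :
    (coxGen M i * coxGen M j) ^ (M i j) = 1 := by
  rcases le_total i j with h | h
  · exact cox_rel M i j h hm
  · have h1 := cox_rel M j i h (by rwa [M.symmetric j i])
    have h2 : (coxGen M i * coxGen M j) = (coxGen M j * coxGen M i)⁻¹ := by
      rw [mul_inv_rev, s_inv, s_inv]
    rw [M.symmetric i j, h2, inv_pow, h1, inv_one]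

theorem sign_gen (i : Fin n) : coxSign M (coxGen M i) = -1 :=
  PresentedGroup.toGroup.of _

/-! The homomorphism `φ : Q → W`. -/

def phi0 : PresentedGroup (bourbakiRels M hn) →* CoxGroup M :=
  PresentedGroup.toGroup
    (f := Sum.elim (fun i => coxGen M ⟨0, hn⟩ * coxGen M i)
      (fun i => coxGen M i * coxGen M ⟨0, hn⟩)) (by
    rintro r (rfl | ⟨i, j, hij, hm, rfl⟩ | ⟨i, j, hij, hm, rfl⟩)
    · rw [FreeGroup.lift_apply_of]
      exact s_sq M ⟨0, hn⟩
    · rw [map_mul, map_inv, map_altProd, map_altProd, FreeGroup.lift_apply_of, FreeGroup.lift_apply_of,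
        FreeGroup.lift_apply_of, FreeGroup.lift_apply_of, Sum.elim_inl, Sum.elim_inr, Sum.elim_inl,
        Sum.elim_inr, mul_inv_eq_one]
      rw [show coxGen M j * coxGen M ⟨0, hn⟩ = (coxGen M ⟨0, hn⟩ * coxGen M j)⁻¹ by
          rw [mul_inv_rev, s_inv, s_inv],
        show coxGen M ⟨0, hn⟩ * coxGen M i = (coxGen M i * coxGen M ⟨0, hn⟩)⁻¹ by
          rw [mul_inv_rev, s_inv, s_inv]]
      apply (altProd_eq_iff _ _ _).2
      rw [show (coxGen M i * coxGen M ⟨0, hn⟩) * (coxGen M ⟨0, hn⟩ * coxGen M j)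
            = coxGen M i * coxGen M j by
          rw [mul_assoc, ← mul_assoc (coxGen M ⟨0, hn⟩), s_sq, one_mul]]
      exact cox_rel' M i j hm
    · rw [map_mul, map_inv, map_altProd, map_altProd, FreeGroup.lift_apply_of, FreeGroup.lift_apply_of,
        FreeGroup.lift_apply_of, FreeGroup.lift_apply_of, Sum.elim_inl, Sum.elim_inr, Sum.elim_inl,
        Sum.elim_inr, mul_inv_eq_one]
      rw [show coxGen M ⟨0, hn⟩ * coxGen M j = (coxGen M j * coxGen M ⟨0, hn⟩)⁻¹ by
          rw [mul_inv_rev, s_inv, s_inv],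
        show coxGen M i * coxGen M ⟨0, hn⟩ = (coxGen M ⟨0, hn⟩ * coxGen M i)⁻¹ by
          rw [mul_inv_rev, s_inv, s_inv]]
      apply (altProd_eq_iff _ _ _).2
      -- goal : ((s₀ * sᵢ) * (sⱼ * s₀)) ^ (M i j) = 1
      rw [show (coxGen M ⟨0, hn⟩ * coxGen M i) * (coxGen M j * coxGen M ⟨0, hn⟩)
            = coxGen M ⟨0, hn⟩ * ((coxGen M i * coxGen M j) * coxGen M ⟨0, hn⟩) by group]
      have h3 := conj_pow (coxGen M ⟨0, hn⟩)
        ((coxGen M i * coxGen M j) * coxGen M ⟨0, hn⟩) (M i j)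
      rw [show ((coxGen M i * coxGen M j) * coxGen M ⟨0, hn⟩) * coxGen M ⟨0, hn⟩
            = coxGen M i * coxGen M j by rw [mul_assoc, s_sq, mul_one],
        cox_rel' M i j hm, mul_one] at h3
      exact right_eq_mul.mp h3)

theorem phi0_inl (i : Fin n) :
    phi0 M hn (PresentedGroup.of (Sum.inl i)) = coxGen M ⟨0, hn⟩ * coxGen M i :=
  PresentedGroup.toGroup.of _

theorem phi0_inr (i : Fin n) :
    phi0 M hn (PresentedGroup.of (Sum.inr i)) = coxGen M i * coxGen M ⟨0, hn⟩ :=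
  PresentedGroup.toGroup.of _

def phi : Q M hn →* CoxGroup M :=
  QuotientGroup.lift _ (phi0 M hn) (by
    apply Subgroup.normalClosure_le_normal
    rintro y (rfl | ⟨i, hi, rfl⟩)
    · rw [SetLike.mem_coe, MonoidHom.mem_ker, phi0_inl]
      exact s_sq M ⟨0, hn⟩
    · rw [SetLike.mem_coe, MonoidHom.mem_ker, map_mul, phi0_inl, phi0_inr]
      rw [mul_assoc, ← mul_assoc (coxGen M ⟨0, hn⟩), s_sq, one_mul, s_sq])

theorem phi_x (i : Fin n) : phi M hn (x M hn i) = coxGen M ⟨0, hn⟩ * coxGen M i := by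
  have h : phi M hn (QuotientGroup.mk (PresentedGroup.of (Sum.inl i))) =
      phi0 M hn (PresentedGroup.of (Sum.inl i)) := QuotientGroup.lift_mk' _ _ _
  rw [show x M hn i = (QuotientGroup.mk (PresentedGroup.of (Sum.inl i)) : Q M hn) from rfl,
    h, phi0_inl]

theorem phi_x' (i : Fin n) : phi M hn (x' M hn i) = coxGen M i * coxGen M ⟨0, hn⟩ := by
  have h : phi M hn (QuotientGroup.mk (PresentedGroup.of (Sum.inr i))) =
      phi0 M hn (PresentedGroup.of (Sum.inr i)) := QuotientGroup.lift_mk' _ _ _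
  rw [show x' M hn i = (QuotientGroup.mk (PresentedGroup.of (Sum.inr i)) : Q M hn) from rfl,
    h, phi0_inr]

theorem phi_mem (q : Q M hn) : phi M hn q ∈ coxAlt M := by
  rw [coxAlt, MonoidHom.mem_ker]
  have h : (coxSign M).comp (phi M hn) = 1 := by
    apply q_hom_ext
    · intro i
      rw [MonoidHom.comp_apply, phi_x, map_mul, sign_gen, sign_gen, MonoidHom.one_apply]
      decide
    · intro i
      rw [MonoidHom.comp_apply, phi_x', map_mul, sign_gen, sign_gen, MonoidHom.one_apply]
      decide
  exact DFunLike.congr_fun h q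

end Main

section Main2
variable {n : ℕ} (M : CoxeterMatrix (Fin n)) (hn : 0 < n)

/-! The involution `σ` of `Q` swapping `x i` and `x' i`. -/

def sig0 : PresentedGroup (bourbakiRels M hn) →* Q M hn :=
  PresentedGroup.toGroup (f := Sum.elim (x' M hn) (x M hn)) (by
    rintro r (rfl | ⟨i, j, hij, hm, rfl⟩ | ⟨i, j, hij, hm, rfl⟩)
    · rw [FreeGroup.lift_apply_of, Sum.elim_inr]
      exact x_zero M hn
    · rw [map_mul, map_inv, map_altProd, map_altProd, FreeGroup.lift_apply_of, FreeGroup.lift_apply_of,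
        FreeGroup.lift_apply_of, FreeGroup.lift_apply_of, Sum.elim_inl, Sum.elim_inr, Sum.elim_inl,
        Sum.elim_inr, mul_inv_eq_one]
      exact rel3 M hn i j hij hm
    · rw [map_mul, map_inv, map_altProd, map_altProd, FreeGroup.lift_apply_of, FreeGroup.lift_apply_of,
        FreeGroup.lift_apply_of, FreeGroup.lift_apply_of, Sum.elim_inl, Sum.elim_inr, Sum.elim_inl,
        Sum.elim_inr, mul_inv_eq_one]
      exact rel2 M hn i j hij hm)

theorem sig0_inl (i : Fin n) : sig0 M hn (PresentedGroup.of (Sum.inl i)) = x' M hn i :=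
  PresentedGroup.toGroup.of _

theorem sig0_inr (i : Fin n) : sig0 M hn (PresentedGroup.of (Sum.inr i)) = x M hn i :=
  PresentedGroup.toGroup.of _

def sig : Q M hn →* Q M hn :=
  QuotientGroup.lift _ (sig0 M hn) (by
    apply Subgroup.normalClosure_le_normal
    rintro y (rfl | ⟨i, hi, rfl⟩)
    · rw [SetLike.mem_coe, MonoidHom.mem_ker, sig0_inl]
      exact x'_zero M hn
    · rw [SetLike.mem_coe, MonoidHom.mem_ker, map_mul, sig0_inl, sig0_inr]
      exact x_mul_x' M hn i)

theorem sig_x (i : Fin n) : sig M hn (x M hn i) = x' M hn i := by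
  have h : sig M hn (QuotientGroup.mk (PresentedGroup.of (Sum.inl i))) =
      sig0 M hn (PresentedGroup.of (Sum.inl i)) := QuotientGroup.lift_mk' _ _ _
  rw [show x M hn i = (QuotientGroup.mk (PresentedGroup.of (Sum.inl i)) : Q M hn) from rfl,
    h, sig0_inl]

theorem sig_x' (i : Fin n) : sig M hn (x' M hn i) = x M hn i := by
  have h : sig M hn (QuotientGroup.mk (PresentedGroup.of (Sum.inr i))) =
      sig0 M hn (PresentedGroup.of (Sum.inr i)) := QuotientGroup.lift_mk' _ _ _
  rw [show x' M hn i = (QuotientGroup.mk (PresentedGroup.of (Sum.inr i)) : Q M hn) from rfl,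
    h, sig0_inr]

theorem sig_sig : (sig M hn).comp (sig M hn) = MonoidHom.id _ := by
  apply q_hom_ext
  · intro i
    rw [MonoidHom.comp_apply, sig_x, sig_x', MonoidHom.id_apply]
  · intro i
    rw [MonoidHom.comp_apply, sig_x', sig_x, MonoidHom.id_apply]

theorem sig_sig_apply (q : Q M hn) : sig M hn (sig M hn q) = q :=
  DFunLike.congr_fun (sig_sig M hn) q

def sigA : MulAut (Q M hn) where
  toFun := sig M hn
  invFun := sig M hn
  left_inv := sig_sig_apply M hn
  right_inv := sig_sig_apply M hn
  map_mul' := map_mul _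

theorem sigA_sq : sigA M hn * sigA M hn = 1 := by
  ext q
  exact sig_sig_apply M hn q

def act : ℤˣ →* MulAut (Q M hn) where
  toFun u := if u = 1 then 1 else sigA M hn
  map_one' := if_pos rfl
  map_mul' u v := by
    rcases Int.units_eq_one_or u with rfl | rfl <;>
      rcases Int.units_eq_one_or v with rfl | rfl <;>
      simp [sigA_sq]

theorem act_neg : act M hn (-1) = sigA M hn := by
  show (if (-1 : ℤˣ) = 1 then 1 else sigA M hn) = sigA M hn
  rw [if_neg (by decide : ¬(-1 : ℤˣ) = 1)]

theorem act_neg_apply (q : Q M hn) : act M hn (-1) q = sig M hn q := by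
  rw [act_neg]; rfl

abbrev G' := SemidirectProduct (Q M hn) ℤˣ (act M hn)

theorem mk_neg_mul (a b : Q M hn) :
    (⟨a, -1⟩ : G' M hn) * ⟨b, -1⟩ = SemidirectProduct.inl (a * sig M hn b) := by
  ext
  · rw [SemidirectProduct.mul_left, SemidirectProduct.left_inl]
    show a * act M hn (-1) b = _
    rw [act_neg_apply]
  · rw [SemidirectProduct.mul_right, SemidirectProduct.right_inl]
    norm_num

def psi : CoxGroup M →* G' M hn :=
  PresentedGroup.toGroup (f := fun i => (⟨x' M hn i, -1⟩ : G' M hn)) (by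
    rintro r ⟨i, j, hij, hm, rfl⟩
    rw [map_pow, map_mul, FreeGroup.lift_apply_of, FreeGroup.lift_apply_of, mk_neg_mul, sig_x',
      ← map_pow]
    rw [show x' M hn i * x M hn j = (x M hn i)⁻¹ * x M hn j by rw [x'_eq_inv]]
    rw [key M hn i j hij hm, map_one])

theorem psi_of (i : Fin n) : psi M hn (coxGen M i) = (⟨x' M hn i, -1⟩ : G' M hn) :=
  PresentedGroup.toGroup.of _

theorem right_psi : (SemidirectProduct.rightHom).comp (psi M hn) = coxSign M := by
  apply PresentedGroup.ext
  intro i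
  show SemidirectProduct.rightHom (psi M hn (coxGen M i)) = coxSign M (coxGen M i)
  rw [psi_of, sign_gen, SemidirectProduct.rightHom]
  rfl

theorem right_psi_coxAlt (w : coxAlt M) : (psi M hn ((w : CoxGroup M))).right = 1 := by
  have h := DFunLike.congr_fun (right_psi M hn) (w : CoxGroup M)
  rw [MonoidHom.comp_apply] at h
  rw [show (psi M hn ((w : CoxGroup M))).right
      = SemidirectProduct.rightHom (psi M hn ((w : CoxGroup M))) from rfl, h]
  exact w.2

/-! The homomorphism `Φ : G' → W`. -/

def f2 : ℤˣ →* CoxGroup M where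
  toFun u := if u = 1 then 1 else coxGen M ⟨0, hn⟩
  map_one' := if_pos rfl
  map_mul' u v := by
    rcases Int.units_eq_one_or u with rfl | rfl <;>
      rcases Int.units_eq_one_or v with rfl | rfl <;>
      simp [s_sq]

theorem f2_neg : f2 M hn (-1) = coxGen M ⟨0, hn⟩ := by
  show (if (-1 : ℤˣ) = 1 then 1 else coxGen M ⟨0, hn⟩) = coxGen M ⟨0, hn⟩
  rw [if_neg (by decide : ¬(-1 : ℤˣ) = 1)]

theorem phi_sig : (phi M hn).comp ((act M hn (-1)).toMonoidHom) =
    (MulAut.conj (coxGen M ⟨0, hn⟩)).toMonoidHom.comp (phi M hn) := by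
  apply q_hom_ext
  · intro i
    show phi M hn (act M hn (-1) (x M hn i))
      = coxGen M ⟨0, hn⟩ * phi M hn (x M hn i) * (coxGen M ⟨0, hn⟩)⁻¹
    rw [act_neg_apply, sig_x, phi_x', phi_x, s_inv, ← mul_assoc, s_sq, one_mul]
  · intro i
    show phi M hn (act M hn (-1) (x' M hn i))
      = coxGen M ⟨0, hn⟩ * phi M hn (x' M hn i) * (coxGen M ⟨0, hn⟩)⁻¹
    rw [act_neg_apply, sig_x', phi_x, phi_x', s_inv, mul_assoc, mul_assoc, s_sq, mul_one]

def Phi : G' M hn →* CoxGroup M :=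
  SemidirectProduct.lift (phi M hn) (f2 M hn) (by
    intro u
    rcases Int.units_eq_one_or u with rfl | rfl
    · rw [map_one, map_one, map_one]
      exact MonoidHom.ext fun q => rfl
    · rw [f2_neg]
      exact phi_sig M hn)

theorem Phi_apply (a : G' M hn) : Phi M hn a = phi M hn a.left * f2 M hn a.right := rfl

theorem Phi_psi : (Phi M hn).comp (psi M hn) = MonoidHom.id _ := by
  apply PresentedGroup.ext
  intro i
  show Phi M hn (psi M hn (coxGen M i)) = coxGen M i
  rw [psi_of, Phi_apply]
  show phi M hn (x' M hn i) * f2 M hn (-1) = coxGen M i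
  rw [phi_x', f2_neg, mul_assoc, s_sq, mul_one]

theorem psi_phi : (psi M hn).comp (phi M hn) =
    (SemidirectProduct.inl : Q M hn →* G' M hn) := by
  apply q_hom_ext
  · intro i
    rw [MonoidHom.comp_apply, phi_x, map_mul, psi_of, psi_of, mk_neg_mul, sig_x',
      x'_zero, one_mul]
  · intro i
    rw [MonoidHom.comp_apply, phi_x', map_mul, psi_of, psi_of, mk_neg_mul,
      x'_zero, map_one, mul_one]

/-! Assembling the equivalence. -/

def phi' : Q M hn →* coxAlt M :=
  (phi M hn).codRestrict (coxAlt M) (phi_mem M hn)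

def chi : coxAlt M →* Q M hn where
  toFun w := (psi M hn (w : CoxGroup M)).left
  map_one' := by
    show (psi M hn ((1 : coxAlt M) : CoxGroup M)).left = 1
    rw [OneMemClass.coe_one, map_one, SemidirectProduct.one_left]
  map_mul' w v := by
    show (psi M hn ((w * v : coxAlt M) : CoxGroup M)).left = _
    rw [Subgroup.coe_mul, map_mul, SemidirectProduct.mul_left, right_psi_coxAlt,
      map_one, MulAut.one_apply]

def iso : Q M hn ≃* coxAlt M where
  toFun := phi' M hn
  invFun := chi M hn
  left_inv q := by
    show (psi M hn ((phi' M hn q : coxAlt M) : CoxGroup M)).left = q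
    have h : ((phi' M hn q : coxAlt M) : CoxGroup M) = phi M hn q := rfl
    rw [h, show psi M hn (phi M hn q) = SemidirectProduct.inl q from
      DFunLike.congr_fun (psi_phi M hn) q, SemidirectProduct.left_inl]
  right_inv w := by
    apply Subtype.ext
    show phi M hn (chi M hn w) = (w : CoxGroup M)
    have h1 : Phi M hn (psi M hn (w : CoxGroup M)) = (w : CoxGroup M) :=
      DFunLike.congr_fun (Phi_psi M hn) (w : CoxGroup M)
    rw [Phi_apply, right_psi_coxAlt, map_one, mul_one] at h1
    exact h1
  map_mul' := map_mul _

theorem iso_x (i : Fin n) :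
    ((iso M hn (x M hn i) : coxAlt M) : CoxGroup M) = coxGen M ⟨0, hn⟩ * coxGen M i :=
  phi_x M hn i

theorem iso_x' (i : Fin n) :
    ((iso M hn (x' M hn i) : coxAlt M) : CoxGroup M) = coxGen M i * coxGen M ⟨0, hn⟩ :=
  phi_x' M hn i

end Main2

end BourbakiProof

/-- The quotient of the presented group `B` by the normal closure of
`{R_0} ∪ {R'_i R_i : i ≠ 0}` is isomorphic to the alternating subgroup `W⁺` of the Coxeter
group, via the map induced by `R_i ↦ s_0 s_i` and `R'_i ↦ s_i s_0`. -/
theorem quotient_of_bourbaki_presentation_iso_alternating_coxeter_group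
    (n : ℕ) (hn : 0 < n) (M : CoxeterMatrix (Fin n)) :
    ∃ e : (PresentedGroup (bourbakiRels M hn) ⧸ Subgroup.normalClosure
        { x : PresentedGroup (bourbakiRels M hn) |
          x = PresentedGroup.of (Sum.inl (⟨0, hn⟩ : Fin n)) ∨
          ∃ i : Fin n, i ≠ ⟨0, hn⟩ ∧
            x = PresentedGroup.of (Sum.inr i) * PresentedGroup.of (Sum.inl i) }) ≃* coxAlt M,
      (∀ i : Fin n,
        ((e (QuotientGroup.mk (PresentedGroup.of (Sum.inl i))) : coxAlt M) : CoxGroup M) =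
          coxGen M ⟨0, hn⟩ * coxGen M i) ∧
      (∀ i : Fin n,
        ((e (QuotientGroup.mk (PresentedGroup.of (Sum.inr i))) : coxAlt M) : CoxGroup M) =
          coxGen M i * coxGen M ⟨0, hn⟩) := by
  
  exact ⟨BourbakiProof.iso M hn, fun i => BourbakiProof.iso_x M hn i,
    fun i => BourbakiProof.iso_x' M hn i⟩
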